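/- For all integers k ≥ 1 and n > 2k, with b_{n,k} defined by b_{n,k}^{−1} := 2^{k−1}(k−1)!·(n−2)(n−4)···(n−2k)·ω_{n−1}, where ω_{n−1} is the surface measure of the unit sphere S^{n−1} ⊂ ℝⁿ, one has the integral identity b_{n,k} · ∫_{ℝⁿ} B₀^{2*_k − 1} dx = 𝔠_{n,k}^{(n−2k)/2}. -/

import Mathlib

open MeasureTheory Real Set Filter


-- continuity of the radial integrand
lemma radCont (m : ℕ) (p : ℝ) : Continuous fun t : ℝ => t ^ m * (1 + t ^ 2) ^ p := by
  refine (continuous_pow m).mul (Continuous.rpow_const (by continuity) fun t => ?_)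
  left; positivity

-- integrability
lemma radInt (n k : ℕ) (hn : 1 ≤ n) (hk : 1 ≤ k) :
    IntegrableOn (fun t : ℝ => t ^ (n - 1) * (1 + t ^ 2) ^ (-((n : ℝ) + 2 * k) / 2))
      (Ioi 0) := by
  have hsplit : (Ioi (0:ℝ)) = Ioc 0 1 ∪ Ioi 1 := by
    rw [Ioc_union_Ioi_eq_Ioi]; norm_num
  rw [hsplit]
  have h1k : (1:ℝ) ≤ k := by exact_mod_cast hk
  refine IntegrableOn.union ?_ ?_
  · exact (radCont _ _).integrableOn_Ioc
  · refine (integrableOn_Ioi_rpow_of_lt (a := -(1 + 2 * k)) (by linarith) one_pos).mono'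
      ((radCont _ _).aestronglyMeasurable.restrict) ?_
    filter_upwards [ae_restrict_mem measurableSet_Ioi] with t ht
    have h1 : (1:ℝ) < t := ht
    have ht0 : (0:ℝ) < t := lt_trans one_pos h1
    rw [Real.norm_eq_abs, abs_of_nonneg (by positivity)]
    have hb : (1 + t ^ 2) ^ (-((n : ℝ) + 2 * k) / 2) ≤ (t ^ 2) ^ (-((n : ℝ) + 2 * k) / 2) := by
      apply Real.rpow_le_rpow_of_nonpos (by positivity) (by linarith)
      have : (0:ℝ) < (n:ℝ) + 2 * k := by positivity
      linarith
    calc t ^ (n - 1) * (1 + t ^ 2) ^ (-((n : ℝ) + 2 * k) / 2)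
        ≤ t ^ (n - 1) * (t ^ 2) ^ (-((n : ℝ) + 2 * k) / 2) := by
          exact mul_le_mul_of_nonneg_left hb (by positivity)
      _ = t ^ (-(1 + 2 * (k:ℝ))) := by
          rw [← Real.rpow_natCast t (n-1), ← Real.rpow_natCast t 2, ← Real.rpow_mul ht0.le,
            ← Real.rpow_add ht0]
          congr 1
          have : ((n - 1 : ℕ) : ℝ) = (n:ℝ) - 1 := by
            have := Nat.cast_sub hn (R := ℝ); simpa using this
          rw [this]; push_cast; ring

lemma hasDerivG (n : ℕ) (hn : 1 ≤ n) (a t : ℝ) :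
    HasDerivAt (fun t : ℝ => t ^ n * (1 + t ^ 2) ^ (-a / 2))
      (((n : ℝ) - a) * (t ^ (n - 1) * (1 + t ^ 2) ^ (-a / 2))
        + a * (t ^ (n - 1) * (1 + t ^ 2) ^ (-(a + 2) / 2))) t := by
  have hpos : (0:ℝ) < 1 + t ^ 2 := by positivity
  have h1 : HasDerivAt (fun t : ℝ => 1 + t ^ 2) (2 * t) t := by
    simpa using (hasDerivAt_pow 2 t).const_add 1
  have h2 : HasDerivAt (fun t : ℝ => (1 + t ^ 2) ^ (-a / 2))
      (2 * t * (-a / 2) * (1 + t ^ 2) ^ (-a / 2 - 1)) t :=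
    h1.rpow_const (Or.inl hpos.ne')
  have h3 := (hasDerivAt_pow n t).mul h2
  have hnn : t ^ n = t ^ (n - 1) * t := by
    conv_lhs => rw [← Nat.sub_add_cancel hn]
    rw [pow_succ]
  have key : (1 + t ^ 2) ^ (-a / 2 - 1) * t ^ 2
      = (1 + t ^ 2) ^ (-a / 2) - (1 + t ^ 2) ^ (-a / 2 - 1) := by
    have h4 : (1 + t ^ 2) ^ (-a / 2 - 1) * (1 + t ^ 2) = (1 + t ^ 2) ^ (-a / 2) := by
      rw [← Real.rpow_add_one hpos.ne']
      ring_nf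
    nlinarith [h4]
  have hexp : -(a + 2) / 2 = -a / 2 - 1 := by ring
  rw [hexp]
  refine h3.congr_deriv (Eq.symm ?_)
  rw [hnn]
  linear_combination (a * t ^ (n - 1)) * key

lemma tendstoBase (n : ℕ) :
    Filter.Tendsto (fun t : ℝ => t ^ n * (1 + t ^ 2) ^ (-(n : ℝ) / 2))
      Filter.atTop (nhds 1) := by
  have hinv : Filter.Tendsto (fun t : ℝ => (1 + t ^ 2)⁻¹) Filter.atTop (nhds 0) :=
    tendsto_inv_atTop_zero.comp
      (Filter.tendsto_atTop_add_const_left _ 1 (tendsto_pow_atTop two_ne_zero))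
  have h0 : Filter.Tendsto (fun t : ℝ => t ^ 2 / (1 + t ^ 2)) Filter.atTop (nhds 1) := by
    have := Filter.Tendsto.const_sub (1:ℝ) hinv
    rw [sub_zero] at this
    refine this.congr fun t => ?_
    have hpos : (0:ℝ) < 1 + t ^ 2 := by positivity
    field_simp
    ring
  have h1 : Filter.Tendsto (fun t : ℝ => (t ^ 2 / (1 + t ^ 2)) ^ ((n : ℝ) / 2))
      Filter.atTop (nhds 1) := by
    simpa using h0.rpow_const (Or.inr (by positivity : (0:ℝ) ≤ (n : ℝ) / 2))
  refine h1.congr' ?_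
  filter_upwards [Filter.eventually_gt_atTop (0:ℝ)] with t ht
  have hpos : (0:ℝ) < 1 + t ^ 2 := by positivity
  have h2 : (t ^ 2) ^ ((n : ℝ) / 2) = t ^ n := by
    rw [← Real.rpow_natCast t 2, ← Real.rpow_mul ht.le,
      show ((2:ℕ):ℝ) * ((n : ℝ) / 2) = ((n:ℕ) : ℝ) by push_cast; ring, Real.rpow_natCast]
  rw [Real.div_rpow (by positivity) hpos.le, h2, neg_div, Real.rpow_neg hpos.le,
    div_eq_mul_inv]

lemma tendstoStep (n : ℕ) (a : ℝ) (ha : (n : ℝ) < a) :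
    Filter.Tendsto (fun t : ℝ => t ^ n * (1 + t ^ 2) ^ (-a / 2))
      Filter.atTop (nhds 0) := by
  have h2 : Filter.Tendsto (fun t : ℝ => (1 + t ^ 2) ^ (((n : ℝ) - a) / 2))
      Filter.atTop (nhds 0) := by
    have ht1 : Filter.Tendsto (fun t : ℝ => 1 + t ^ 2) Filter.atTop Filter.atTop :=
      Filter.tendsto_atTop_add_const_left _ 1 (tendsto_pow_atTop two_ne_zero)
    have ht2 := tendsto_rpow_neg_atTop (by linarith : (0:ℝ) < (a - (n : ℝ)) / 2)
    have := ht2.comp ht1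
    refine this.congr fun t => ?_
    simp only [Function.comp]
    congr 1
    ring
  have h3 := (tendstoBase n).mul h2
  rw [one_mul] at h3
  refine h3.congr fun t => ?_
  have hpos : (0:ℝ) < 1 + t ^ 2 := by positivity
  rw [mul_assoc, ← Real.rpow_add hpos]
  congr 2
  ring

lemma radVal (n : ℕ) (hn : 1 ≤ n) : ∀ k : ℕ, 1 ≤ k →
    ∫ t in Ioi (0:ℝ), t ^ (n - 1) * (1 + t ^ 2) ^ (-((n : ℝ) + 2 * k) / 2)
      = 2 ^ (k - 1) * (Nat.factorial (k - 1) : ℝ)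
          / ∏ i ∈ Finset.range k, ((n : ℝ) + 2 * i) := by
  have hn0 : (0:ℝ) < n := by exact_mod_cast hn
  refine Nat.le_induction ?_ ?_
  · -- base case k = 1
    have hG : ∀ x : ℝ, HasDerivAt (fun t : ℝ => t ^ n * (1 + t ^ 2) ^ (-(n:ℝ) / 2))
        ((n:ℝ) * (x ^ (n - 1) * (1 + x ^ 2) ^ (-((n:ℝ) + 2 * (1:ℕ)) / 2))) x := by
      intro x
      have h := hasDerivG n hn (n:ℝ) x
      have he : -((n:ℝ) + 2 * (1:ℕ)) / 2 = -((n:ℝ) + 2) / 2 := by push_cast; ring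
      rw [he]
      convert h using 1
      ring
    have hint0 := radInt n 1 hn le_rfl
    have hint : IntegrableOn
        (fun x : ℝ => (n:ℝ) * (x ^ (n - 1) * (1 + x ^ 2) ^ (-((n:ℝ) + 2 * (1:ℕ)) / 2)))
        (Ioi 0) := by
      exact hint0.const_mul _
    have hFTC := integral_Ioi_of_hasDerivAt_of_tendsto' (fun x _ => hG x) hint (tendstoBase n)
    rw [MeasureTheory.integral_const_mul] at hFTC
    rw [zero_pow (by omega : n ≠ 0), zero_mul, sub_zero] at hFTC
    have hR : (2:ℝ) ^ (1 - 1) * ((Nat.factorial (1 - 1) : ℕ) : ℝ)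
        / ∏ i ∈ Finset.range 1, ((n:ℝ) + 2 * i) = 1 / n := by
      norm_num [Finset.prod_range_one, Nat.factorial]
    rw [hR, eq_div_iff hn0.ne']
    linarith [hFTC]
  · -- inductive step
    intro k hk IH
    set a : ℝ := (n:ℝ) + 2 * k with ha
    have hk0 : (0:ℝ) < k := by exact_mod_cast hk
    have hna : (n:ℝ) < a := by rw [ha]; linarith
    have hG : ∀ x : ℝ, HasDerivAt (fun t : ℝ => t ^ n * (1 + t ^ 2) ^ (-a / 2))
        (((n:ℝ) - a) * (x ^ (n - 1) * (1 + x ^ 2) ^ (-((n:ℝ) + 2 * k) / 2))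
          + a * (x ^ (n - 1) * (1 + x ^ 2) ^ (-((n:ℝ) + 2 * (k + 1 : ℕ)) / 2))) x := by
      intro x
      have h := hasDerivG n hn a x
      have he1 : -((n:ℝ) + 2 * (k + 1 : ℕ)) / 2 = -(a + 2) / 2 := by rw [ha]; push_cast; ring
      rw [he1]
      exact h
    have hint1 := radInt n k hn hk
    have hint2 := radInt n (k + 1) hn (by omega)
    have hint : IntegrableOn
        (fun x : ℝ => ((n:ℝ) - a) * (x ^ (n - 1) * (1 + x ^ 2) ^ (-((n:ℝ) + 2 * k) / 2))
          + a * (x ^ (n - 1) * (1 + x ^ 2) ^ (-((n:ℝ) + 2 * (k + 1 : ℕ)) / 2))) (Ioi 0) :=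
      (hint1.const_mul _).add (hint2.const_mul _)
    have hFTC := integral_Ioi_of_hasDerivAt_of_tendsto' (fun x _ => hG x) hint
      (tendstoStep n a hna)
    rw [MeasureTheory.integral_add (hint1.const_mul _) (hint2.const_mul _),
      MeasureTheory.integral_const_mul, MeasureTheory.integral_const_mul] at hFTC
    rw [zero_pow (by omega : n ≠ 0), zero_mul, sub_zero, IH] at hFTC
    set P : ℝ := ∏ i ∈ Finset.range k, ((n : ℝ) + 2 * i) with hP
    have hPpos : 0 < P := Finset.prod_pos fun i _ => by positivity
    have hapos : 0 < a := by rw [ha]; positivity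
    have hfac : ((Nat.factorial k : ℕ) : ℝ) = k * (Nat.factorial (k - 1) : ℝ) := by
      conv_lhs => rw [← Nat.sub_add_cancel hk]
      rw [Nat.factorial_succ]
      push_cast [Nat.sub_add_cancel hk]
      ring
    have hpow : (2:ℝ) ^ k = 2 * 2 ^ (k - 1) := by
      conv_lhs => rw [← Nat.sub_add_cancel hk]
      rw [pow_succ]
      ring
    simp only [Nat.add_sub_cancel]
    rw [Finset.prod_range_succ, ← hP, hfac, hpow, ← ha]
    have hane : a ≠ 0 := hapos.ne'
    have hPne : P ≠ 0 := hPpos.ne'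
    have e2 : a * (∫ t in Ioi (0:ℝ), t ^ (n - 1) * (1 + t ^ 2) ^ (-((n:ℝ) + 2 * (k + 1 : ℕ)) / 2))
        = (a - (n:ℝ)) * (2 ^ (k - 1) * ((Nat.factorial (k - 1) : ℕ) : ℝ) / P) := by
      linear_combination hFTC
    have han2 : a - (n:ℝ) = 2 * k := by rw [ha]; ring
    rw [han2] at e2
    rw [eq_div_iff (mul_ne_zero hPne hane)]
    calc (∫ t in Ioi (0:ℝ), t ^ (n - 1) * (1 + t ^ 2) ^ (-((n:ℝ) + 2 * (k + 1 : ℕ)) / 2)) * (P * a)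
        = P * (a * ∫ t in Ioi (0:ℝ), t ^ (n - 1) * (1 + t ^ 2) ^ (-((n:ℝ) + 2 * (k + 1 : ℕ)) / 2)) := by
          ring
      _ = P * (2 * k * (2 ^ (k - 1) * ((Nat.factorial (k - 1) : ℕ) : ℝ) / P)) := by rw [e2]
      _ = 2 * 2 ^ (k - 1) * ((k : ℝ) * ((Nat.factorial (k - 1) : ℕ) : ℝ)) := by
          field_simp

/-- The constant `𝔠_{n,k} := (∏_{j=-k}^{k-1} (n+2j))^{1/k}` (reindexed by `j ↦ j - k`). -/
noncomputable def cnk (n k : ℕ) : ℝ :=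
  (∏ j ∈ Finset.range (2 * k), ((n : ℝ) + 2 * j - 2 * k)) ^ ((k : ℝ)⁻¹)

/-- The canonical bubble `B₀(x) = (1 + 𝔠_{n,k}⁻¹ |x|²)^{(2k-n)/2}` on `ℝⁿ`. -/
noncomputable def canonicalBubble (n k : ℕ) (x : EuclideanSpace ℝ (Fin n)) : ℝ :=
  (1 + (cnk n k)⁻¹ * ‖x‖ ^ 2) ^ (((2 * k : ℝ) - n) / 2)

/-- The surface measure `ω_{n-1}` of the unit sphere `S^{n-1} ⊂ ℝⁿ`, expressed via the
standard identity `ω_{n-1} = n · vol(B(0,1))`. -/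
noncomputable def sphereSurface (n : ℕ) : ℝ :=
  n * (volume (Metric.ball (0 : EuclideanSpace ℝ (Fin n)) 1)).toReal

theorem stmt2 (k n : ℕ) (hk : 1 ≤ k) (hn : 2 * k < n) (b : ℝ)
    (hb : b⁻¹ = 2 ^ (k - 1) * (Nat.factorial (k - 1) : ℝ) *
      (∏ i ∈ Finset.range k, ((n : ℝ) - 2 * (i + 1))) * sphereSurface n) :
    b * ∫ x : EuclideanSpace ℝ (Fin n),
        canonicalBubble n k x ^ (((n : ℝ) + 2 * k) / ((n : ℝ) - 2 * k)) =
      cnk n k ^ (((n : ℝ) - 2 * k) / 2) := by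
  have hn1 : 1 ≤ n := by omega
  have hnk : (0:ℝ) < (n:ℝ) - 2 * k := by
    have : (2 * k : ℝ) < n := by exact_mod_cast hn
    push_cast at this ⊢
    linarith
  -- positivity of the big product and of cnk
  set P2 : ℝ := ∏ j ∈ Finset.range (2 * k), ((n : ℝ) + 2 * j - 2 * k) with hP2
  have hP2pos : 0 < P2 := Finset.prod_pos fun j hj => by
    have : (0:ℝ) ≤ 2 * (j:ℝ) := by positivity
    linarith
  set c : ℝ := cnk n k with hc
  have hcpos : 0 < c := Real.rpow_pos_of_pos hP2pos _
  -- c ^ k = P2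
  have hck : c ^ ((k:ℕ) : ℝ) = P2 := by
    rw [hc, cnk, ← Real.rpow_mul hP2pos.le, inv_mul_cancel₀ (by exact_mod_cast hk.trans_lt' Nat.zero_lt_one |>.ne' : ((k:ℕ):ℝ) ≠ 0), Real.rpow_one]
  -- split P2 = Q * R
  set Q : ℝ := ∏ i ∈ Finset.range k, ((n : ℝ) - 2 * (i + 1)) with hQ
  set R : ℝ := ∏ i ∈ Finset.range k, ((n : ℝ) + 2 * i) with hR
  have hsplit : P2 = Q * R := by
    rw [hP2, two_mul, Finset.prod_range_add]
    congr 1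
    · rw [hQ, ← Finset.prod_range_reflect]
      refine Finset.prod_congr rfl fun i hi => ?_
      have hik : i < k := Finset.mem_range.mp hi
      have hcast : ((k - 1 - i : ℕ) : ℝ) = (k:ℝ) - 1 - i := by
        have h1 : k - 1 - i = k - (i + 1) := by omega
        rw [h1, Nat.cast_sub (by omega)]
        push_cast
        ring
      rw [hcast]
      ring
    · refine Finset.prod_congr rfl fun i hi => ?_
      push_cast
      ring
  have hQpos : 0 < Q := Finset.prod_pos fun i hi => by
    have hik : i < k := Finset.mem_range.mp hi
    have : ((i:ℝ) + 1) ≤ k := by exact_mod_cast Nat.succ_le_of_lt hik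
    linarith
  have hRpos : 0 < R := Finset.prod_pos fun i hi => by positivity
  -- nontriviality
  haveI : Nontrivial (EuclideanSpace ℝ (Fin n)) := by
    refine ⟨EuclideanSpace.single ⟨0, by omega⟩ 1, 0, fun h => ?_⟩
    have := congrArg norm h
    rw [EuclideanSpace.norm_single, norm_zero] at this
    norm_num at this
  -- rewrite the integrand
  have hpt : ∀ x : EuclideanSpace ℝ (Fin n),
      canonicalBubble n k x ^ (((n : ℝ) + 2 * k) / ((n : ℝ) - 2 * k))
        = (fun r : ℝ => (1 + c⁻¹ * r ^ 2) ^ (-((n:ℝ) + 2 * k) / 2)) ‖x‖ := by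
    intro x
    have hbase : (0:ℝ) < 1 + c⁻¹ * ‖x‖ ^ 2 := by positivity
    rw [canonicalBubble, ← hc, ← Real.rpow_mul hbase.le]
    congr 1
    field_simp
    ring
  rw [show (∫ x : EuclideanSpace ℝ (Fin n),
      canonicalBubble n k x ^ (((n : ℝ) + 2 * k) / ((n : ℝ) - 2 * k)))
      = ∫ x : EuclideanSpace ℝ (Fin n),
        (fun r : ℝ => (1 + c⁻¹ * r ^ 2) ^ (-((n:ℝ) + 2 * k) / 2)) ‖x‖ from
    integral_congr_ae (Filter.Eventually.of_forall hpt)]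
  rw [MeasureTheory.integral_fun_norm_addHaar volume
    (fun r : ℝ => (1 + c⁻¹ * r ^ 2) ^ (-((n:ℝ) + 2 * k) / 2))]
  simp only [finrank_euclideanSpace_fin, nsmul_eq_mul, smul_eq_mul]
  -- scaling
  set s : ℝ := Real.sqrt c with hs
  have hspos : 0 < s := Real.sqrt_pos.mpr hcpos
  have hs2 : s ^ 2 = c := Real.sq_sqrt hcpos.le
  have hscale : (∫ y in Set.Ioi (0:ℝ), y ^ (n - 1) * (1 + c⁻¹ * y ^ 2) ^ (-((n:ℝ) + 2 * k) / 2))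
      = s ^ n * ∫ t in Set.Ioi (0:ℝ), t ^ (n - 1) * (1 + t ^ 2) ^ (-((n:ℝ) + 2 * k) / 2) := by
    have h1 := integral_comp_mul_left_Ioi
      (fun y : ℝ => y ^ (n - 1) * (1 + c⁻¹ * y ^ 2) ^ (-((n:ℝ) + 2 * k) / 2)) 0 hspos
    rw [mul_zero] at h1
    have h2 : ∀ x : ℝ, (s * x) ^ (n - 1) * (1 + c⁻¹ * (s * x) ^ 2) ^ (-((n:ℝ) + 2 * k) / 2)
        = s ^ (n - 1) * (x ^ (n - 1) * (1 + x ^ 2) ^ (-((n:ℝ) + 2 * k) / 2)) := by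
      intro x
      have : c⁻¹ * (s * x) ^ 2 = x ^ 2 := by
        rw [mul_pow, hs2, ← mul_assoc, inv_mul_cancel₀ hcpos.ne', one_mul]
      rw [this, mul_pow]
      ring
    simp only [h2] at h1
    rw [MeasureTheory.integral_const_mul] at h1
    have hsn : s ^ n = s * s ^ (n - 1) := by
      conv_lhs => rw [← Nat.sub_add_cancel hn1]
      rw [pow_succ]
      ring
    rw [smul_eq_mul] at h1
    rw [hsn]
    field_simp at h1 ⊢
    linarith [h1]
  rw [hscale, radVal n hn1 k hk, ← hR]
  -- final algebra
  have hV : 0 < (volume (Metric.ball (0 : EuclideanSpace ℝ (Fin n)) 1)).toReal :=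
    ENNReal.toReal_pos (Metric.measure_ball_pos volume 0 one_pos).ne'
      MeasureTheory.measure_ball_lt_top.ne
  have hb' : b = (2 ^ (k - 1) * (Nat.factorial (k - 1) : ℝ) * Q * sphereSurface n)⁻¹ := by
    rw [← inv_inv b, hb]
  have hsn : (s : ℝ) ^ n = c ^ ((n:ℝ) / 2) := by
    rw [hs, Real.sqrt_eq_rpow, ← Real.rpow_natCast (c ^ (1 / (2:ℝ))) n,
      ← Real.rpow_mul hcpos.le]
    congr 1
    ring
  have hgoal : c ^ (((n:ℝ) - 2 * k) / 2) = c ^ ((n:ℝ) / 2) / (Q * R) := by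
    rw [show ((n:ℝ) - 2 * k) / 2 = (n:ℝ) / 2 - ((k:ℕ):ℝ) by push_cast; ring,
      Real.rpow_sub hcpos, hck, hsplit]
  rw [hb', hsn, hgoal, sphereSurface]
  have hfacpos : (0:ℝ) < (Nat.factorial (k - 1) : ℝ) := by
    exact_mod_cast Nat.factorial_pos (k - 1)
  have hnpos : (0:ℝ) < n := by exact_mod_cast hn1
  have hcp : (0:ℝ) < c ^ ((n:ℝ) / 2) := Real.rpow_pos_of_pos hcpos _
  field_simp
  ring
  rfl
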